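/- For every natural number n ≥ 1 and every real number x > 0, the functions g_n(x) = ∫_0^x (ln t)/(1+t^2)^{n+1} dt and f_n(x) = ∫_0^x dt/(1+t^2)^{n+1} satisfy 2n·g_n(x) - (2n-1)·g_{n-1}(x) = 2n·(ln x)·f_n(x) - ((2n-1)·ln x + 1)·f_{n-1}(x). -/

import Mathlib

open Real MeasureTheory intervalIntegral Set

lemma intervalIntegrable_log_zero {x : ℝ} (hx : 0 < x) :
    IntervalIntegrable Real.log volume 0 x := by
  have hg : IntervalIntegrable (fun t : ℝ => 2 * t ^ (-(1:ℝ)/2) + 2 * t ^ ((1:ℝ)/2))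
      volume 0 x :=
    ((intervalIntegrable_rpow' (by norm_num)).const_mul 2).add
      ((intervalIntegrable_rpow' (by norm_num)).const_mul 2)
  refine IntervalIntegrable.mono_fun' hg
    (Real.measurable_log.aestronglyMeasurable.restrict) ?_
  rw [uIoc_of_le hx.le]
  filter_upwards [ae_restrict_mem measurableSet_Ioc] with t ht
  have ht0 : 0 < t := ht.1
  have h1 : -(1:ℝ)/2 * Real.log t ≤ t ^ (-(1:ℝ)/2) - 1 := by
    have := Real.log_le_sub_one_of_pos (Real.rpow_pos_of_pos ht0 (-(1:ℝ)/2))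
    rwa [Real.log_rpow ht0] at this
  have h2 : (1:ℝ)/2 * Real.log t ≤ t ^ ((1:ℝ)/2) - 1 := by
    have := Real.log_le_sub_one_of_pos (Real.rpow_pos_of_pos ht0 ((1:ℝ)/2))
    rwa [Real.log_rpow ht0] at this
  have p1 : (0:ℝ) < t ^ (-(1:ℝ)/2) := Real.rpow_pos_of_pos ht0 _
  have p2 : (0:ℝ) < t ^ ((1:ℝ)/2) := Real.rpow_pos_of_pos ht0 _
  simp only [Real.norm_eq_abs]
  rw [abs_le]
  constructor <;> nlinarith

lemma intervalIntegrable_logdiv {x : ℝ} (hx : 0 < x) (k : ℕ) :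
    IntervalIntegrable (fun t : ℝ => Real.log t / (1 + t ^ 2) ^ k) volume 0 x := by
  refine IntervalIntegrable.mono_fun (intervalIntegrable_log_zero hx)
    ((Real.measurable_log.div ((measurable_const.add (measurable_id.pow_const 2)).pow_const
      k)).aestronglyMeasurable.restrict) ?_
  filter_upwards with t
  have h1 : (1:ℝ) ≤ (1 + t ^ 2) ^ k := one_le_pow₀ (by nlinarith [sq_nonneg t])
  have hpos : (0:ℝ) < (1 + t ^ 2) ^ k := by positivity
  simp only [Real.norm_eq_abs]
  rw [abs_div, abs_of_pos hpos]
  exact div_le_self (abs_nonneg _) h1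

lemma intervalIntegrable_onediv (x : ℝ) (k : ℕ) :
    IntervalIntegrable (fun t : ℝ => 1 / (1 + t ^ 2) ^ k) volume 0 x := by
  apply Continuous.intervalIntegrable
  exact continuous_const.div (by continuity) (fun t => by positivity)

/-- The functions `gₙ(x) = ∫_0^x ln t/(1+t²)^(n+1) dt` and `fₙ(x) = ∫_0^x dt/(1+t²)^(n+1)`
satisfy `2n gₙ - (2n-1) g_{n-1} = 2n (ln x) fₙ - ((2n-1) ln x + 1) f_{n-1}` for `n ≥ 1`. -/
theorem g_recurrence (n : ℕ) (hn : 1 ≤ n) (x : ℝ) (hx : 0 < x) :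
    2 * (n : ℝ) * (∫ t in (0:ℝ)..x, Real.log t / (1 + t ^ 2) ^ (n + 1))
      - (2 * (n : ℝ) - 1) * (∫ t in (0:ℝ)..x, Real.log t / (1 + t ^ 2) ^ n) =
    2 * (n : ℝ) * Real.log x * (∫ t in (0:ℝ)..x, 1 / (1 + t ^ 2) ^ (n + 1))
      - ((2 * (n : ℝ) - 1) * Real.log x + 1) * ∫ t in (0:ℝ)..x, 1 / (1 + t ^ 2) ^ n := by
  obtain ⟨m, rfl⟩ : ∃ m, n = m + 1 := ⟨n - 1, (Nat.succ_pred_eq_of_pos hn).symm⟩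
  set n := m + 1 with hnm
  have hne : ∀ t : ℝ, (1 + t ^ 2 : ℝ) ≠ 0 := fun t => by positivity
  have hvder : ∀ t : ℝ, HasDerivAt (fun s : ℝ => (1 + s ^ 2) ^ n)
      ((n : ℝ) * (1 + t ^ 2) ^ m * (2 * t)) t := by
    intro t
    have h1 : HasDerivAt (fun s : ℝ => 1 + s ^ 2) (2 * t) t := by
      simpa using ((hasDerivAt_pow 2 t).const_add 1)
    simpa [hnm] using h1.fun_pow n
  -- FTC for the f-part
  have eqf : (∫ t in (0:ℝ)..x, (2 * (n:ℝ) * (1 / (1 + t ^ 2) ^ (n+1))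
      - (2 * (n:ℝ) - 1) * (1 / (1 + t ^ 2) ^ n))) = x / (1 + x ^ 2) ^ n := by
    have hK : ∀ t ∈ Set.uIcc (0:ℝ) x, HasDerivAt (fun s : ℝ => s / (1 + s ^ 2) ^ n)
        (2 * (n:ℝ) * (1 / (1 + t ^ 2) ^ (n+1)) - (2 * (n:ℝ) - 1) * (1 / (1 + t ^ 2) ^ n)) t := by
      intro t _
      have := (hasDerivAt_id t).fun_div (hvder t) (pow_ne_zero n (hne t))
      refine this.congr_deriv ?_
      have h2 : (1 + t ^ 2 : ℝ) ≠ 0 := hne t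
      simp only [id_eq, hnm]
      field_simp [hnm]
      ring
    have hint : IntervalIntegrable (fun t : ℝ => 2 * (n:ℝ) * (1 / (1 + t ^ 2) ^ (n+1))
        - (2 * (n:ℝ) - 1) * (1 / (1 + t ^ 2) ^ n)) volume 0 x :=
      ((intervalIntegrable_onediv x (n+1)).const_mul _).sub
        ((intervalIntegrable_onediv x n).const_mul _)
    rw [integral_eq_sub_of_hasDerivAt hK hint]
    simp
  -- FTC for the g-part
  have eqg : (∫ t in (0:ℝ)..x, (2 * (n:ℝ) * (Real.log t / (1 + t ^ 2) ^ (n+1))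
      - (2 * (n:ℝ) - 1) * (Real.log t / (1 + t ^ 2) ^ n) + 1 / (1 + t ^ 2) ^ n))
      = x * Real.log x / (1 + x ^ 2) ^ n := by
    have hcont : ContinuousOn (fun s : ℝ => s * Real.log s / (1 + s ^ 2) ^ n)
        (Set.Icc 0 x) :=
      (Real.continuous_mul_log.div (by continuity) (fun t => pow_ne_zero n (hne t))).continuousOn
    have hH : ∀ t ∈ Set.Ioo (0:ℝ) x, HasDerivAt (fun s : ℝ => s * Real.log s / (1 + s ^ 2) ^ n)
        (2 * (n:ℝ) * (Real.log t / (1 + t ^ 2) ^ (n+1))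
          - (2 * (n:ℝ) - 1) * (Real.log t / (1 + t ^ 2) ^ n) + 1 / (1 + t ^ 2) ^ n) t := by
      intro t ht
      have ht0 : t ≠ 0 := ht.1.ne'
      have hnum : HasDerivAt (fun s : ℝ => s * Real.log s)
          (1 * Real.log t + t * t⁻¹) t := (hasDerivAt_id t).mul (Real.hasDerivAt_log ht0)
      have := hnum.fun_div (hvder t) (pow_ne_zero n (hne t))
      refine this.congr_deriv ?_
      have h2 : (1 + t ^ 2 : ℝ) ≠ 0 := hne t
      field_simp [hnm]
      ring
    have hint : IntervalIntegrable (fun t : ℝ => 2 * (n:ℝ) * (Real.log t / (1 + t ^ 2) ^ (n+1))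
        - (2 * (n:ℝ) - 1) * (Real.log t / (1 + t ^ 2) ^ n) + 1 / (1 + t ^ 2) ^ n) volume 0 x :=
      (((intervalIntegrable_logdiv hx (n+1)).const_mul _).sub
        ((intervalIntegrable_logdiv hx n).const_mul _)).add (intervalIntegrable_onediv x n)
    rw [integral_eq_sub_of_hasDerivAt_of_le hx.le hcont hH hint]
    simp
  -- split the integrals
  rw [integral_add (((intervalIntegrable_logdiv hx (n+1)).const_mul _).sub
        ((intervalIntegrable_logdiv hx n).const_mul _)) (intervalIntegrable_onediv x n),
      integral_sub ((intervalIntegrable_logdiv hx (n+1)).const_mul _)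
        ((intervalIntegrable_logdiv hx n).const_mul _),
      intervalIntegral.integral_const_mul, intervalIntegral.integral_const_mul] at eqg
  rw [integral_sub ((intervalIntegrable_onediv x (n+1)).const_mul _)
        ((intervalIntegrable_onediv x n).const_mul _),
      intervalIntegral.integral_const_mul, intervalIntegral.integral_const_mul] at eqf
  have hx' : x * Real.log x / (1 + x ^ 2) ^ n = Real.log x * (x / (1 + x ^ 2) ^ n) := by ring
  rw [hx', ← eqf] at eqg
  linarith [eqg]
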